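/- Let (s,t) ∈ ℚ²∖ℤ². Then f_{(s,t)} |₂ A = f_{(s,t)} for every A ∈ Γ_{(s,t)} := { A ∈ SL(2,ℤ) : (s,t)A − (s,t) ∈ ℤ² }, where (s,t)A denotes the row vector–matrix product. -/

import Mathlib

/-- The lattice `ℤτ + ℤ`. -/
def lat (τ : ℂ) : Set ℂ := {w : ℂ | ∃ m n : ℤ, w = (m : ℂ) * τ + (n : ℂ)}

/-- The Weierstrass ℘-function attached to a set `Ω ⊂ ℂ`. -/
noncomputable def wp (Ω : Set ℂ) (z : ℂ) : ℂ :=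
  1 / z ^ 2 + ∑' ω : {w : ℂ // w ∈ Ω ∧ w ≠ 0}, (1 / (z - (ω : ℂ)) ^ 2 - 1 / (ω : ℂ) ^ 2)

/-- `f_{(s,t)}(τ) = ℘(τ, sτ + t)`, where `℘(τ,z) = ℘(τℤ+ℤ, z)`. -/
noncomputable def f (s t : ℚ) (τ : ℂ) : ℂ := wp (lat τ) ((s : ℂ) * τ + (t : ℂ))

open Complex Filter Function

namespace WPAux

noncomputable def L (τ : ℂ) (p : ℤ × ℤ) : ℂ := (p.1 : ℂ) * τ + (p.2 : ℂ)
noncomputable def g (τ z : ℂ) (p : ℤ × ℤ) : ℂ := 1 / (z - L τ p) ^ 2 - 1 / (L τ p) ^ 2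

lemma L_add (τ : ℂ) (p q : ℤ × ℤ) : L τ (p + q) = L τ p + L τ q := by
  simp only [L, Prod.fst_add, Prod.snd_add]; push_cast; ring

lemma L_neg (τ : ℂ) (p : ℤ × ℤ) : L τ (-p) = - L τ p := by
  simp only [L, Prod.fst_neg, Prod.snd_neg]; push_cast; ring

lemma L_injective {τ : ℂ} (hτ : 0 < τ.im) : Function.Injective (L τ) := by
  intro p q h
  have h1 : ((p.1 - q.1 : ℤ) : ℂ) * τ + ((p.2 - q.2 : ℤ) : ℂ) = 0 := by
    unfold L at h; push_cast; linear_combination h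
  have him := congrArg Complex.im h1
  simp only [Complex.add_im, Complex.mul_im, Complex.intCast_im, Complex.intCast_re,
    Complex.zero_im, zero_mul, mul_zero, add_zero, zero_add] at him
  have hm : ((p.1 - q.1 : ℤ) : ℝ) = 0 := by
    rcases mul_eq_zero.1 him with h' | h'
    · exact h'
    · exact absurd h' (ne_of_gt hτ)
  have hm0 : p.1 = q.1 := by exact_mod_cast sub_eq_zero.1 (by exact_mod_cast hm)
  have hre := congrArg Complex.re h1
  rw [show ((p.1 - q.1 : ℤ) : ℂ) = 0 by exact_mod_cast hm] at hre
  simp at hre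
  have hn0 : p.2 = q.2 := by exact_mod_cast sub_eq_zero.1 (by exact_mod_cast hre)
  exact Prod.ext hm0 hn0

def v (p : ℤ × ℤ) : Fin 2 → ℤ := ![p.1, p.2]

lemma v_eq (p : ℤ × ℤ) : v p = (finTwoArrowEquiv ℤ).symm p := rfl

lemma summable_g {τ : ℂ} (hτ : 0 < τ.im) (z : ℂ) : Summable (g τ z) := by
  obtain ⟨r, hr0, hrbound⟩ : ∃ r : ℝ, 0 < r ∧ ∀ x : Fin 2 → ℤ, x ≠ 0 →
      r * ‖x‖ ≤ ‖(x 0 : ℂ) * τ + (x 1 : ℂ)‖ := by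
    refine ⟨EisensteinSeries.r ⟨τ, hτ⟩, EisensteinSeries.r_pos _, fun x hx => ?_⟩
    exact EisensteinSeries.r_mul_max_le ⟨τ, hτ⟩ hx
  obtain ⟨C, hC⟩ : ∃ C : ℝ, C = 12 * ‖z‖ / r ^ 3 := ⟨_, rfl⟩
  have hb : Summable (fun p : ℤ × ℤ => C * ‖(finTwoArrowEquiv ℤ).symm p‖ ^ (-3 : ℝ)) := by
    have h1 : Summable (fun x : Fin 2 → ℤ => C * ‖x‖ ^ (-3 : ℝ)) :=
      Summable.mul_left C (EisensteinSeries.summable_one_div_norm_rpow (by norm_num))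
    exact ((finTwoArrowEquiv ℤ).symm.summable_iff).2 h1
  apply Summable.of_norm_bounded_eventually hb
  rw [eventually_cofinite]
  obtain ⟨R, hR⟩ : ∃ R : ℝ, R = (2 * ‖z‖ + 1) / r := ⟨_, rfl⟩
  have hR0 : 0 < R := by rw [hR]; positivity
  have key : ∀ p : ℤ × ℤ, R < ‖v p‖ → ‖g τ z p‖ ≤ C * ‖(finTwoArrowEquiv ℤ).symm p‖ ^ (-3 : ℝ) := by
    intro p hp
    rw [← v_eq]
    have hvpos : (0:ℝ) < ‖v p‖ := lt_trans hR0 hp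
    have hvne : v p ≠ 0 := by
      intro h0; rw [h0, norm_zero] at hvpos; exact lt_irrefl _ hvpos
    have hpne : r * ‖v p‖ ≤ ‖(v p 0 : ℂ) * τ + (v p 1 : ℂ)‖ := hrbound _ hvne
    have hLv : ‖(v p 0 : ℂ) * τ + (v p 1 : ℂ)‖ = ‖L τ p‖ := by
      simp only [v, Matrix.cons_val_zero, Matrix.cons_val_one, Matrix.head_cons,
        L]
    set w : ℂ := L τ p with hw
    have hwv : r * ‖v p‖ ≤ ‖w‖ := by rw [← hLv]; exact hpne
    have hwge : 2 * ‖z‖ + 1 ≤ ‖w‖ := by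
      have h1 : 2 * ‖z‖ + 1 ≤ r * ‖v p‖ := by
        rw [hR] at hp
        calc 2 * ‖z‖ + 1 = r * ((2 * ‖z‖ + 1) / r) := by field_simp
        _ ≤ r * ‖v p‖ := by gcongr
      linarith
    have hzw : ‖z‖ ≤ ‖w‖ / 2 := by linarith [norm_nonneg (z : ℂ)]
    have hw1 : (1:ℝ) ≤ ‖w‖ := by linarith [norm_nonneg (z : ℂ)]
    have hwpos : (0:ℝ) < ‖w‖ := by linarith
    have hw0 : w ≠ 0 := by intro h; rw [h, norm_zero] at hwpos; exact lt_irrefl _ hwpos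
    have hzwne : z - w ≠ 0 := by
      intro h
      have hzz : z = w := by linear_combination h
      rw [hzz] at hzw; linarith
    have hzwpos : (0:ℝ) < ‖z - w‖ := norm_pos_iff.mpr hzwne
    have hnormzw : ‖w‖ / 2 ≤ ‖z - w‖ := by
      have h2 := norm_sub_norm_le w z
      rw [norm_sub_rev w z] at h2
      linarith
    have hident : g τ z p = z * (2*w - z) / (w^2 * (z-w)^2) := by
      rw [g, ← hw]
      field_simp
      ring
    have hbound : ‖g τ z p‖ ≤ 12 * ‖z‖ / ‖w‖^3 := by
      rw [hident, norm_div, norm_mul, norm_mul, norm_pow, norm_pow]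
      rw [div_le_div_iff₀ (by positivity) (by positivity)]
      have h2wz : ‖2*w - z‖ ≤ 3 * ‖w‖ := by
        calc ‖2*w - z‖ ≤ ‖2*w‖ + ‖z‖ := norm_sub_le _ _
        _ = 2*‖w‖ + ‖z‖ := by rw [norm_mul]; norm_num
        _ ≤ 3 * ‖w‖ := by linarith
      calc ‖z‖ * ‖2*w-z‖ * ‖w‖^3 ≤ ‖z‖ * (3*‖w‖) * ‖w‖^3 := by gcongr
      _ = 12 * ‖z‖ * (‖w‖^2 * (‖w‖/2)^2) := by ring
      _ ≤ 12 * ‖z‖ * (‖w‖^2 * ‖z-w‖^2) := by gcongr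
    refine hbound.trans ?_
    rw [Real.rpow_neg (norm_nonneg _), show ((3:ℝ)) = ((3:ℕ):ℝ) by norm_num,
      Real.rpow_natCast]
    calc 12*‖z‖/‖w‖^3 ≤ 12*‖z‖/(r*‖v p‖)^3 := by gcongr
    _ = C * (‖v p‖^3)⁻¹ := by
        rw [hC, mul_pow, div_eq_mul_inv, mul_inv, ← mul_assoc, ← div_eq_mul_inv]
        ring
  refine Set.Finite.subset (Set.finite_Icc (-(⌈R⌉+1), -(⌈R⌉+1)) (⌈R⌉+1, ⌈R⌉+1)) ?_
  intro p hp
  simp only [Set.mem_setOf_eq] at hp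
  have hle : ‖v p‖ ≤ R := by
    by_contra hgt
    exact hp (key p (lt_of_not_ge hgt))
  have hcoord : ∀ i : Fin 2, |((v p i : ℤ) : ℝ)| ≤ R := by
    intro i
    calc |((v p i : ℤ) : ℝ)| = ‖v p i‖ := (Int.norm_eq_abs _).symm
    _ ≤ ‖v p‖ := norm_le_pi_norm (v p) i
    _ ≤ R := hle
  have hbnd : ∀ m : ℤ, |(m:ℝ)| ≤ R → -(⌈R⌉+1) ≤ m ∧ m ≤ ⌈R⌉+1 := by
    intro m hm
    rw [abs_le] at hm
    have hceil := Int.le_ceil R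
    constructor
    · have : (-(⌈R⌉+1) : ℝ) ≤ (m:ℝ) := by push_cast; linarith
      exact_mod_cast this
    · have : (m:ℝ) ≤ ((⌈R⌉+1 : ℤ) : ℝ) := by push_cast; linarith
      exact_mod_cast this
  have h1 := hbnd p.1 (by simpa only [v, Matrix.cons_val_zero] using hcoord 0)
  have h2 := hbnd p.2 (by simpa only [v, Matrix.cons_val_one, Matrix.head_cons, Matrix.cons_val_fin_one] using hcoord 1)
  simp only [Set.mem_Icc, Prod.le_def]
  exact ⟨⟨h1.1, h2.1⟩, ⟨h1.2, h2.2⟩⟩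

lemma wp_eq {τ : ℂ} (hτ : 0 < τ.im) (z : ℂ) :
    wp (lat τ) z = ∑' p : ℤ × ℤ, g τ z p := by
  rw [wp, Summable.tsum_eq_add_tsum_ite (summable_g hτ z) 0]
  congr 1
  · simp [g, L]
  · have hLne : ∀ p : ℤ × ℤ, p ≠ 0 → L τ p ≠ 0 := by
      intro p hp h0
      exact hp (L_injective hτ (h0.trans (by simp [L] : L τ 0 = 0).symm))
    let F : {p : ℤ × ℤ // p ≠ 0} → {w : ℂ // w ∈ lat τ ∧ w ≠ 0} :=
      fun p => ⟨L τ p.1, ⟨p.1.1, p.1.2, rfl⟩, hLne p.1 p.2⟩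
    have hFbij : Function.Bijective F := by
      constructor
      · intro x y hxy
        exact Subtype.ext (L_injective hτ (congrArg Subtype.val hxy))
      · rintro ⟨w, ⟨m, n, hw⟩, hw0⟩
        refine ⟨⟨(m, n), ?_⟩, ?_⟩
        · intro h0
          apply hw0
          have hm := congrArg Prod.fst h0
          have hn := congrArg Prod.snd h0
          simp only [Prod.fst_zero, Prod.snd_zero] at hm hn
          rw [hw, hm, hn]
          simp
        · exact Subtype.ext hw.symm
    let e := Equiv.ofBijective F hFbij
    rw [← Equiv.tsum_eq e (fun ω => 1 / (z - (ω : ℂ)) ^ 2 - 1 / (ω : ℂ) ^ 2)]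
    have hsupp : Function.support (fun p : ℤ × ℤ => if p = 0 then 0 else g τ z p)
        ⊆ {p : ℤ × ℤ | p ≠ 0} := by
      intro p hp
      simp only [Function.mem_support] at hp
      intro h0
      rw [if_pos h0] at hp
      exact hp rfl
    rw [← tsum_subtype_eq_of_support_subset hsupp]
    apply tsum_congr
    rintro ⟨p, hp⟩
    simp only [if_neg hp]
    rfl

lemma tsum_shift {τ : ℂ} (hτ : 0 < τ.im) (z : ℂ) (q : ℤ × ℤ) :
    ∑' p, g τ (z + L τ q) p = ∑' p, g τ z p := by
  have h1 : ∑' p, g τ (z + L τ q) p = ∑' p, g τ (z + L τ q) (p + q) :=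
    (Equiv.tsum_eq (Equiv.addRight q) (g τ (z + L τ q))).symm
  have hFval : ∀ p : ℤ × ℤ, g τ (z + L τ q) (p + q)
      = 1 / (z - L τ p) ^ 2 - 1 / (L τ p + L τ q) ^ 2 := by
    intro p
    rw [g, L_add]
    ring_nf
  have hF : Summable (fun p => 1 / (z - L τ p) ^ 2 - 1 / (L τ p + L τ q) ^ 2) := by
    have := ((Equiv.addRight q).summable_iff (f := g τ (z + L τ q))).2 (summable_g hτ _)
    apply Summable.congr this
    intro p
    exact hFval p
  have hG : Summable (g τ z) := summable_g hτ z
  have hzero : ∑' p, ((1 / (z - L τ p) ^ 2 - 1 / (L τ p + L τ q) ^ 2) - g τ z p) = 0 := by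
    have hDval : ∀ p : ℤ × ℤ, (1 / (z - L τ p) ^ 2 - 1 / (L τ p + L τ q) ^ 2) - g τ z p
        = 1 / (L τ p) ^ 2 - 1 / (L τ p + L τ q) ^ 2 := by
      intro p; rw [g]; ring
    rw [tsum_congr hDval]
    set D : ℤ × ℤ → ℂ := fun p => 1 / (L τ p) ^ 2 - 1 / (L τ p + L τ q) ^ 2 with hD
    let σ : ℤ × ℤ ≃ ℤ × ℤ :=
      ⟨fun p => -p - q, fun p => -p - q, fun p => by ring, fun p => by ring⟩
    have hanti : ∀ p, D (σ p) = - D p := by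
      intro p
      have hσ : σ p = -p - q := rfl
      rw [hσ, hD]
      simp only
      have hL1 : L τ (-p - q) = -(L τ p + L τ q) := by
        rw [sub_eq_add_neg, L_add, L_neg, L_neg]; ring
      rw [hL1]
      have h2 : (-(L τ p + L τ q)) ^ 2 = (L τ p + L τ q) ^ 2 := neg_sq _
      have h3 : (-(L τ p + L τ q) + L τ q) = -(L τ p) := by ring
      rw [h2, h3, neg_sq]
      ring
    have heq := Equiv.tsum_eq σ D
    rw [tsum_congr hanti, tsum_neg] at heq
    have : ∑' p, D p + ∑' p, D p = 0 := by linear_combination -heq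
    exact add_self_eq_zero.mp this
  have hsplit := Summable.tsum_sub hF hG
  rw [hzero] at hsplit
  have hFG : ∑' p, (1 / (z - L τ p) ^ 2 - 1 / (L τ p + L τ q) ^ 2) = ∑' p, g τ z p := by
    linear_combination -hsplit
  rw [h1, tsum_congr hFval, hFG]

end WPAux

open WPAux in
/-- for `(s,t) ∈ ℚ²∖ℤ²`, `f_{(s,t)} |₂ A = f_{(s,t)}` for every
`A = ((a,b),(c,d)) ∈ Γ_{(s,t)} = { A ∈ SL(2,ℤ) : (s,t)A − (s,t) ∈ ℤ² }`. -/
theorem f_slash_invariant (s t : ℚ) (hst : ¬ ∃ m n : ℤ, s = (m : ℚ) ∧ t = (n : ℚ))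
    (a b c d : ℤ) (hA : a * d - b * c = 1)
    (hΓ : ∃ m n : ℤ, s * a + t * c - s = (m : ℚ) ∧ s * b + t * d - t = (n : ℚ)) :
    ∀ τ : ℂ, 0 < τ.im →
      ((c : ℂ) * τ + (d : ℂ)) ^ (-2 : ℤ) *
          f s t (((a : ℂ) * τ + (b : ℂ)) / ((c : ℂ) * τ + (d : ℂ))) =
        f s t τ := by
  obtain ⟨m₀, n₀, hm, hn⟩ := hΓ
  intro τ hτ
  have hτne : τ.im ≠ 0 := ne_of_gt hτ
  -- the denominator is nonzero
  have hc : (c : ℂ) * τ + (d : ℂ) ≠ 0 := by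
    intro h0
    have him : (c : ℝ) * τ.im = 0 := by
      have := congrArg Complex.im h0
      simpa using this
    have hc0 : (c : ℝ) = 0 := by
      rcases mul_eq_zero.1 him with h' | h'
      · exact h'
      · exact absurd h' hτne
    have hcz : c = 0 := by exact_mod_cast hc0
    rw [hcz] at h0
    simp at h0
    have hdz : d = 0 := by exact_mod_cast h0
    rw [hcz, hdz] at hA
    simp at hA
  set lam : ℂ := (c : ℂ) * τ + (d : ℂ) with hlam
  set τ' : ℂ := ((a : ℂ) * τ + (b : ℂ)) / lam with hτ'def
  have hlamtau : lam * τ' = (a : ℂ) * τ + (b : ℂ) := by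
    rw [hτ'def]; field_simp
  -- positivity of τ'.im
  have hAr : (a : ℝ) * d - b * c = 1 := by exact_mod_cast hA
  have hnsq : 0 < Complex.normSq lam := Complex.normSq_pos.mpr hc
  have hτ' : 0 < τ'.im := by
    have hwre : ((a:ℂ)*τ+(b:ℂ)).re = (a:ℝ)*τ.re + (b:ℝ) := by simp
    have hwim : ((a:ℂ)*τ+(b:ℂ)).im = (a:ℝ)*τ.im := by simp
    have hlre : lam.re = (c:ℝ)*τ.re + (d:ℝ) := by rw [hlam]; simp
    have hlim : lam.im = (c:ℝ)*τ.im := by rw [hlam]; simp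
    have him : τ'.im = τ.im / Complex.normSq lam := by
      rw [hτ'def, Complex.div_im, hwre, hwim, hlre, hlim]
      field_simp
      linear_combination hAr
    rw [him]
    positivity
  -- cast the Γ-conditions to ℂ
  have hsa : ((s : ℂ)) * a + (t : ℂ) * c = (s : ℂ) + (m₀ : ℂ) := by
    have := congrArg (fun x : ℚ => (x : ℂ)) hm
    push_cast at this
    linear_combination this
  have hsb : ((s : ℂ)) * b + (t : ℂ) * d = (t : ℂ) + (n₀ : ℂ) := by
    have := congrArg (fun x : ℚ => (x : ℂ)) hn
    push_cast at this
    linear_combination this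
  set z : ℂ := (s : ℂ) * τ + (t : ℂ) with hz
  set z' : ℂ := (s : ℂ) * τ' + (t : ℂ) with hz'
  have hq : lam * z' = z + L τ (m₀, n₀) := by
    have h1 : lam * z' = (s : ℂ) * (lam * τ') + (t : ℂ) * lam := by rw [hz']; ring
    rw [h1, hlamtau, hlam, L, hz]
    push_cast
    linear_combination τ * hsa + hsb
  -- the reindexing equivalence
  let μ : ℤ × ℤ ≃ ℤ × ℤ :=
    { toFun := fun p => (p.1 * a + p.2 * c, p.1 * b + p.2 * d)
      invFun := fun q => (q.1 * d - q.2 * c, -q.1 * b + q.2 * a)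
      left_inv := by
        intro p
        refine Prod.ext ?_ ?_
        · simp only
          linear_combination (p.1 : ℤ) * hA
        · simp only
          linear_combination (p.2 : ℤ) * hA
      right_inv := by
        intro q
        refine Prod.ext ?_ ?_
        · simp only
          linear_combination (q.1 : ℤ) * hA
        · simp only
          linear_combination (q.2 : ℤ) * hA }
  have hμL : ∀ p : ℤ × ℤ, L τ (μ p) = lam * L τ' p := by
    intro p
    have h1 : lam * L τ' p = (p.1 : ℂ) * (lam * τ') + (p.2 : ℂ) * lam := by rw [L]; ring
    rw [h1, hlamtau, hlam]
    show ((p.1 * a + p.2 * c : ℤ) : ℂ) * τ + ((p.1 * b + p.2 * d : ℤ) : ℂ)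
      = (p.1 : ℂ) * ((a : ℂ) * τ + b) + (p.2 : ℂ) * ((c : ℂ) * τ + d)
    push_cast
    ring
  -- key scaling identity
  have hkey : ∀ u : ℂ, 1 / (lam * u) ^ 2 = (lam ^ 2)⁻¹ * (1 / u ^ 2) := by
    intro u
    rw [mul_pow, one_div, mul_inv, ← one_div]
    ring
  have hpow : lam ^ (-2 : ℤ) = (lam ^ 2)⁻¹ := by
    rw [zpow_neg]
    norm_cast
  -- main computation
  have hterm : ∀ p : ℤ × ℤ, (lam ^ 2)⁻¹ * g τ' z' p = g τ (z + L τ (m₀, n₀)) (μ p) := by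
    intro p
    rw [g, g, hμL p, ← hq, ← mul_sub, hkey, hkey]
    ring
  calc lam ^ (-2 : ℤ) * f s t τ'
      = (lam ^ 2)⁻¹ * ∑' p : ℤ × ℤ, g τ' z' p := by
        rw [hpow, f, wp_eq hτ']
  _ = ∑' p : ℤ × ℤ, (lam ^ 2)⁻¹ * g τ' z' p := by rw [tsum_mul_left]
  _ = ∑' p : ℤ × ℤ, g τ (z + L τ (m₀, n₀)) (μ p) := tsum_congr hterm
  _ = ∑' p : ℤ × ℤ, g τ (z + L τ (m₀, n₀)) p := Equiv.tsum_eq μ _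
  _ = ∑' p : ℤ × ℤ, g τ z p := tsum_shift hτ z (m₀, n₀)
  _ = f s t τ := by rw [f, wp_eq hτ]
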